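/- Let Σ be a real symmetric positive-definite (m+1)×(m+1) matrix, β > 0, and φ ∈ ℝ^{1×(m+1)} a row vector. If there exists u ∈ ℝᵐ such that (1, u)ᵀ (β² Σ − φᵀ φ) (1, u) ≤ 0, then 1 − (1/β²) φ Σ⁻¹ φᵀ ≤ 0. -/

import Mathlib

open Matrix

lemma vecMulVec_mulVec_aux {n : Type*} [Fintype n] (a b v : n → ℝ) :
    Matrix.vecMulVec a b *ᵥ v = (b ⬝ᵥ v) • a := by
  ext i
  simp [Matrix.mulVec, Matrix.vecMulVec_apply, dotProduct, Finset.mul_sum,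
    mul_comm, mul_assoc, mul_left_comm]

/-- Necessary feasibility condition (Corollary 2 of the paper): if `Σ` is symmetric
positive definite, `β > 0`, and some `u` satisfies `(1,u)ᵀ (β² Σ − φᵀφ) (1,u) ≤ 0`,
then `1 − (1/β²) φ Σ⁻¹ φᵀ ≤ 0`. -/
theorem necessary_feasibility (m : ℕ)
    (Sig : Matrix (Fin (m + 1)) (Fin (m + 1)) ℝ) (hSig : Sig.PosDef)
    (β : ℝ) (hβ : 0 < β) (φ : Fin (m + 1) → ℝ)
    (h : ∃ u : Fin m → ℝ,
      (Fin.cons 1 u) ⬝ᵥ (β ^ 2 • Sig - Matrix.vecMulVec φ φ) *ᵥ (Fin.cons 1 u) ≤ 0) :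
    1 - (1 / β ^ 2) * (φ ⬝ᵥ Sig⁻¹ *ᵥ φ) ≤ 0 := by
  obtain ⟨u, hu⟩ := h
  set v : Fin (m + 1) → ℝ := Fin.cons 1 u with hv
  have hv0 : v ≠ 0 := by
    intro hz
    have : v 0 = 0 := by rw [hz]; rfl
    simp [hv] at this
  set a : ℝ := v ⬝ᵥ Sig *ᵥ v with ha
  set b : ℝ := φ ⬝ᵥ v with hb
  set c : ℝ := φ ⬝ᵥ Sig⁻¹ *ᵥ φ with hc
  have ha_pos : 0 < a := by simpa using hSig.dotProduct_mulVec_pos hv0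
  -- expand the hypothesis
  have hexp : β ^ 2 * a - b * b ≤ 0 := by
    have : (β ^ 2 • Sig - Matrix.vecMulVec φ φ) *ᵥ v
        = β ^ 2 • (Sig *ᵥ v) - b • φ := by
      rw [Matrix.sub_mulVec, vecMulVec_mulVec_aux, smul_mulVec, ← hb]
    calc β ^ 2 * a - b * b
        = v ⬝ᵥ (β ^ 2 • Sig - Matrix.vecMulVec φ φ) *ᵥ v := by
          rw [this, dotProduct_sub, dotProduct_smul, dotProduct_smul, ha,
            smul_eq_mul, smul_eq_mul, hb, dotProduct_comm v φ]
      _ ≤ 0 := hu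
  -- invertibility facts
  have hdet : IsUnit Sig.det := isUnit_iff_ne_zero.2 (ne_of_gt hSig.det_pos)
  have hSigInv : (Sig⁻¹).PosDef := hSig.inv
  set w : Fin (m + 1) → ℝ := Sig⁻¹ *ᵥ φ with hw
  have hSw : Sig *ᵥ w = φ := by
    rw [hw, Matrix.mulVec_mulVec, Matrix.mul_nonsing_inv _ hdet, Matrix.one_mulVec]
  have hsymm : Sigᵀ = Sig := hSig.1
  -- the four pairings
  have hvw : v ⬝ᵥ Sig *ᵥ w = b := by rw [hSw, dotProduct_comm, hb]
  have hwv : w ⬝ᵥ Sig *ᵥ v = b := by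
    rw [Matrix.dotProduct_mulVec, ← Matrix.mulVec_transpose, hsymm, hSw, hb]
  have hww : w ⬝ᵥ Sig *ᵥ w = c := by
    rw [hSw, dotProduct_comm]
  -- case φ = 0
  by_cases hφ : φ = 0
  · exfalso
    have hb0 : b = 0 := by simp [hb, hφ]
    nlinarith [mul_pos (pow_pos hβ 2) ha_pos]
  have hc_pos : 0 < c := by simpa using hSigInv.dotProduct_mulVec_pos hφ
  -- Cauchy–Schwarz via positivity of the quadratic form at z = c•v - b•w
  have hCS : b * b ≤ c * a := by
    have hz : 0 ≤ (c • v - b • w) ⬝ᵥ Sig *ᵥ (c • v - b • w) :=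
      by simpa using hSig.posSemidef.dotProduct_mulVec_nonneg (c • v - b • w)
    have hexp2 : (c • v - b • w) ⬝ᵥ Sig *ᵥ (c • v - b • w)
        = c * c * a - c * b * b - b * c * b + b * b * c := by
      rw [Matrix.mulVec_sub, Matrix.mulVec_smul, Matrix.mulVec_smul,
        dotProduct_sub, sub_dotProduct, sub_dotProduct,
        smul_dotProduct, smul_dotProduct, smul_dotProduct, smul_dotProduct,
        dotProduct_smul, dotProduct_smul, dotProduct_smul, dotProduct_smul]
      simp only [smul_eq_mul, ← ha, hvw, hwv, hww]
      ring
    rw [hexp2] at hz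
    nlinarith
  have hβc : β ^ 2 ≤ c := by nlinarith
  have hβ2 : (0:ℝ) < β ^ 2 := by positivity
  rw [sub_nonpos, div_mul_eq_mul_div, one_mul, le_div_iff₀ hβ2, one_mul]
  exact hβc
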